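/- Let T₁, …, Tₙ be bounded linear operators on a complex Hilbert space H. Then ‖∑_{k=1}^n T_k‖² ≤ (max_{j=1,…,n} ∑_{k=1}^n √‖T_j* T_k‖) · (max_{j=1,…,n} ∑_{k=1}^n √‖T_j T_k*‖), where ‖·‖ denotes the operator norm and T* denotes the Hilbert-space adjoint. -/

import Mathlib

open ContinuousLinearMap

namespace CotlarSteinAux

variable {H : Type*} [NormedAddCommGroup H] [InnerProductSpace ℂ H] [CompleteSpace H]
variable {n : ℕ}

/-- `T j† * T k` -/
noncomputable def aop (T : Fin n → (H →L[ℂ] H)) (j k : Fin n) : H →L[ℂ] H :=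
  adjoint (T j) * T k

/-- `T j * T k†` -/
noncomputable def bop (T : Fin n → (H →L[ℂ] H)) (j k : Fin n) : H →L[ℂ] H :=
  T j * adjoint (T k)

/-- the word `T p₁† T p₂ T q₁† T q₂ ⋯` indexed by a list of pairs -/
noncomputable def wordA (T : Fin n → (H →L[ℂ] H)) (L : List (Fin n × Fin n)) : H →L[ℂ] H :=
  (L.map fun p => aop T p.1 p.2).prod

/-- the regrouped middle part: `midB k L = T k (T q₁† T q₂) ⋯` grouped as `bop`s -/
noncomputable def midB (T : Fin n → (H →L[ℂ] H)) : Fin n → List (Fin n × Fin n) → (H →L[ℂ] H)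
  | k, [] => T k
  | k, q :: L => bop T k q.1 * midB T q.2 L

/-- product of `‖aop‖` along a list -/
noncomputable def nA (T : Fin n → (H →L[ℂ] H)) : List (Fin n × Fin n) → ℝ
  | [] => 1
  | q :: L => ‖aop T q.1 q.2‖ * nA T L

/-- product of `‖bop‖` along the regrouped list -/
noncomputable def nB (T : Fin n → (H →L[ℂ] H)) : Fin n → List (Fin n × Fin n) → ℝ
  | k, [] => ‖T k‖
  | k, q :: L => ‖bop T k q.1‖ * nB T q.2 L

/-- the square-root weight of the tail of a word -/
noncomputable def wB (T : Fin n → (H →L[ℂ] H)) : Fin n → List (Fin n × Fin n) → ℝ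
  | k, [] => Real.sqrt ‖T k‖
  | k, q :: L => Real.sqrt ‖bop T k q.1‖ * Real.sqrt ‖aop T q.1 q.2‖ * wB T q.2 L

variable (T : Fin n → (H →L[ℂ] H))

lemma wordA_nil : wordA T [] = 1 := rfl

lemma wordA_cons (p : Fin n × Fin n) (L : List (Fin n × Fin n)) :
    wordA T (p :: L) = aop T p.1 p.2 * wordA T L := by
  simp [wordA]

lemma regroup : ∀ (L : List (Fin n × Fin n)) (p : Fin n × Fin n),
    wordA T (p :: L) = adjoint (T p.1) * midB T p.2 L
  | [], p => by simp [wordA, aop, midB]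
  | q :: L, p => by
    rw [wordA_cons, regroup L q]
    simp only [midB, aop, bop, mul_assoc]

lemma nA_nonneg : ∀ L : List (Fin n × Fin n), 0 ≤ nA T L
  | [] => zero_le_one
  | q :: L => mul_nonneg (norm_nonneg _) (nA_nonneg L)

lemma nB_nonneg : ∀ (L : List (Fin n × Fin n)) (k : Fin n), 0 ≤ nB T k L
  | [], k => norm_nonneg _
  | q :: L, k => mul_nonneg (norm_nonneg _) (nB_nonneg L q.2)

lemma wB_nonneg : ∀ (L : List (Fin n × Fin n)) (k : Fin n), 0 ≤ wB T k L
  | [], k => Real.sqrt_nonneg _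
  | q :: L, k =>
    mul_nonneg (mul_nonneg (Real.sqrt_nonneg _) (Real.sqrt_nonneg _)) (wB_nonneg L q.2)

lemma norm_midB_le : ∀ (L : List (Fin n × Fin n)) (k : Fin n), ‖midB T k L‖ ≤ nB T k L
  | [], k => le_refl _
  | q :: L, k => by
    refine (norm_mul_le _ _).trans ?_
    exact mul_le_mul_of_nonneg_left (norm_midB_le L q.2) (norm_nonneg _)

lemma norm_wordA_le : ∀ (L : List (Fin n × Fin n)) (p : Fin n × Fin n),
    ‖wordA T (p :: L)‖ ≤ ‖aop T p.1 p.2‖ * nA T L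
  | [], p => by simp [wordA, nA]
  | q :: L, p => by
    rw [wordA_cons]
    refine (norm_mul_le _ _).trans ?_
    exact mul_le_mul_of_nonneg_left (norm_wordA_le L q) (norm_nonneg _)

lemma wB_sq : ∀ (L : List (Fin n × Fin n)) (k : Fin n),
    wB T k L ^ 2 = nB T k L * nA T L
  | [], k => by simp [wB, nB, nA, Real.sq_sqrt (norm_nonneg _)]
  | q :: L, k => by
    simp only [wB, nB, nA, mul_pow, wB_sq L q.2,
      Real.sq_sqrt (norm_nonneg (bop T k q.1)), Real.sq_sqrt (norm_nonneg (aop T q.1 q.2))]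
    ring

lemma norm_adjoint_eq (A : H →L[ℂ] H) : ‖adjoint A‖ = ‖A‖ :=
  (adjoint : (H →L[ℂ] H) ≃ₗᵢ⋆[ℂ] _).norm_map A

/-- Geometric-mean bound on a single word. -/
lemma norm_wordA_le_weight (L : List (Fin n × Fin n)) (p : Fin n × Fin n) :
    ‖wordA T (p :: L)‖ ≤
      Real.sqrt ‖T p.1‖ * Real.sqrt ‖aop T p.1 p.2‖ * wB T p.2 L := by
  have h1 : ‖wordA T (p :: L)‖ ≤ ‖aop T p.1 p.2‖ * nA T L := norm_wordA_le T L p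
  have h2 : ‖wordA T (p :: L)‖ ≤ ‖T p.1‖ * nB T p.2 L := by
    rw [regroup T L p]
    refine (norm_mul_le _ _).trans ?_
    rw [norm_adjoint_eq]
    exact mul_le_mul_of_nonneg_left (norm_midB_le T L p.2) (norm_nonneg _)
  have hsq : ‖wordA T (p :: L)‖ ^ 2 ≤
      (Real.sqrt ‖T p.1‖ * Real.sqrt ‖aop T p.1 p.2‖ * wB T p.2 L) ^ 2 := by
    have : (Real.sqrt ‖T p.1‖ * Real.sqrt ‖aop T p.1 p.2‖ * wB T p.2 L) ^ 2
        = (‖aop T p.1 p.2‖ * nA T L) * (‖T p.1‖ * nB T p.2 L) := by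
      rw [mul_pow, mul_pow, wB_sq, Real.sq_sqrt (norm_nonneg _), Real.sq_sqrt (norm_nonneg _)]
      ring
    rw [this, sq]
    exact mul_le_mul h1 h2 (norm_nonneg _) ((norm_nonneg _).trans h1)
  have hw : 0 ≤ Real.sqrt ‖T p.1‖ * Real.sqrt ‖aop T p.1 p.2‖ * wB T p.2 L :=
    mul_nonneg (mul_nonneg (Real.sqrt_nonneg _) (Real.sqrt_nonneg _)) (wB_nonneg T L p.2)
  calc ‖wordA T (p :: L)‖ = Real.sqrt (‖wordA T (p :: L)‖ ^ 2) :=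
        (Real.sqrt_sq (norm_nonneg _)).symm
    _ ≤ Real.sqrt ((Real.sqrt ‖T p.1‖ * Real.sqrt ‖aop T p.1 p.2‖ * wB T p.2 L) ^ 2) :=
        Real.sqrt_le_sqrt hsq
    _ = _ := Real.sqrt_sq hw

lemma sum_peel {γ : Type*} [AddCommMonoid γ] {β : Type*} [Fintype β] (m : ℕ)
    (F : (Fin (m+1) → β) → γ) :
    ∑ g : Fin (m+1) → β, F g = ∑ p : β, ∑ g : Fin m → β, F (Fin.cons p g) := by
  rw [← (Fin.consEquiv (fun _ : Fin (m+1) => β)).sum_comp F, Fintype.sum_prod_type]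
  rfl

lemma ofFn_cons {β : Type*} (m : ℕ) (p : β) (g : Fin m → β) :
    List.ofFn (Fin.cons p g : Fin (m+1) → β) = p :: List.ofFn g := by
  rw [List.ofFn_succ]
  simp

/-- Expansion of `(S† S)^m` into words. -/
lemma expand : ∀ m : ℕ,
    (adjoint (∑ k, T k) * ∑ k, T k) ^ m
      = ∑ g : Fin m → Fin n × Fin n, wordA T (List.ofFn g)
  | 0 => by
    simp [wordA]
  | (m + 1) => by
    have hU : adjoint (∑ k, T k) * ∑ k, T k = ∑ p : Fin n × Fin n, aop T p.1 p.2 := by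
      rw [map_sum, Finset.sum_mul_sum, Fintype.sum_prod_type]
      rfl
    rw [pow_succ', expand m, hU, Finset.sum_mul_sum,
      sum_peel m (fun g => wordA T (List.ofFn g))]
    refine Finset.sum_congr rfl fun p _ => ?_
    refine Finset.sum_congr rfl fun g _ => ?_
    rw [ofFn_cons, wordA_cons]

end CotlarSteinAux

open CotlarSteinAux in
/-- **Cotlar–Stein lemma.** For bounded operators `T 1, …, T n` on a complex Hilbert
space, `‖∑ T k‖² ≤ (max_j ∑_k √‖T j† T k‖) * (max_j ∑_k √‖T j (T k)†‖)`. -/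
theorem cotlar_stein {H : Type*} [NormedAddCommGroup H] [InnerProductSpace ℂ H]
    [CompleteSpace H] {n : ℕ} (hn : 0 < n) (T : Fin n → (H →L[ℂ] H)) :
    ‖∑ k, T k‖ ^ 2 ≤
      (⨆ j, ∑ k, Real.sqrt ‖adjoint (T j) * T k‖) *
        (⨆ j, ∑ k, Real.sqrt ‖T j * adjoint (T k)‖) := by
  classical
  set S := ∑ k, T k with hS
  set A := ⨆ j, ∑ k, Real.sqrt ‖adjoint (T j) * T k‖ with hA
  set B := ⨆ j, ∑ k, Real.sqrt ‖T j * adjoint (T k)‖ with hB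
  set M := ∑ j, ‖T j‖ with hM
  have hMnn : 0 ≤ M := Finset.sum_nonneg fun j _ => norm_nonneg _
  have hTM : ∀ j, ‖T j‖ ≤ M := fun j =>
    Finset.single_le_sum (fun i _ => norm_nonneg (T i)) (Finset.mem_univ j)
  have hrowA : ∀ j, (∑ k, Real.sqrt ‖aop T j k‖) ≤ A := fun j =>
    le_ciSup (f := fun j => ∑ k, Real.sqrt ‖adjoint (T j) * T k‖)
      (Set.Finite.bddAbove (Set.finite_range _)) j
  have hrowB : ∀ j, (∑ k, Real.sqrt ‖bop T j k‖) ≤ B := fun j =>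
    le_ciSup (f := fun j => ∑ k, Real.sqrt ‖T j * adjoint (T k)‖)
      (Set.Finite.bddAbove (Set.finite_range _)) j
  have hApos : 0 ≤ A := by
    refine le_trans ?_ (hrowA ⟨0, hn⟩)
    exact Finset.sum_nonneg fun k _ => Real.sqrt_nonneg _
  have hBpos : 0 ≤ B := by
    refine le_trans ?_ (hrowB ⟨0, hn⟩)
    exact Finset.sum_nonneg fun k _ => Real.sqrt_nonneg _
  -- chain sum bound
  have hchain : ∀ (m : ℕ) (k : Fin n),
      (∑ g : Fin m → Fin n × Fin n, wB T k (List.ofFn g)) ≤ Real.sqrt M * (A * B) ^ m := by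
    intro m
    induction m with
    | zero =>
      intro k
      simp only [pow_zero, mul_one]
      rw [Fintype.sum_unique]
      show wB T k (List.ofFn _) ≤ _
      rw [List.ofFn_zero]
      exact Real.sqrt_le_sqrt (hTM k)
    | succ m ih =>
      intro k
      rw [sum_peel m (fun g => wB T k (List.ofFn g))]
      have step : ∀ p : Fin n × Fin n,
          (∑ g : Fin m → Fin n × Fin n, wB T k (List.ofFn (Fin.cons p g)))
            = Real.sqrt ‖bop T k p.1‖ * Real.sqrt ‖aop T p.1 p.2‖ *
                ∑ g : Fin m → Fin n × Fin n, wB T p.2 (List.ofFn g) := by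
        intro p
        rw [Finset.mul_sum]
        refine Finset.sum_congr rfl fun g _ => ?_
        rw [ofFn_cons]
        rfl
      calc (∑ p : Fin n × Fin n, ∑ g : Fin m → Fin n × Fin n, wB T k (List.ofFn (Fin.cons p g)))
          ≤ ∑ p : Fin n × Fin n, Real.sqrt ‖bop T k p.1‖ * Real.sqrt ‖aop T p.1 p.2‖ *
              (Real.sqrt M * (A * B) ^ m) := by
            refine Finset.sum_le_sum fun p _ => ?_
            rw [step p]
            exact mul_le_mul_of_nonneg_left (ih p.2)
              (mul_nonneg (Real.sqrt_nonneg _) (Real.sqrt_nonneg _))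
        _ = (∑ j, Real.sqrt ‖bop T k j‖ * ∑ l, Real.sqrt ‖aop T j l‖) *
              (Real.sqrt M * (A * B) ^ m) := by
            rw [Fintype.sum_prod_type, Finset.sum_mul]
            refine Finset.sum_congr rfl fun j _ => ?_
            rw [Finset.mul_sum, Finset.sum_mul]
        _ ≤ (B * A) * (Real.sqrt M * (A * B) ^ m) := by
            refine mul_le_mul_of_nonneg_right ?_
              (mul_nonneg (Real.sqrt_nonneg _) (pow_nonneg (mul_nonneg hApos hBpos) m))
            calc (∑ j, Real.sqrt ‖bop T k j‖ * ∑ l, Real.sqrt ‖aop T j l‖)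
                ≤ ∑ j, Real.sqrt ‖bop T k j‖ * A := by
                  refine Finset.sum_le_sum fun j _ => ?_
                  exact mul_le_mul_of_nonneg_left (hrowA j) (Real.sqrt_nonneg _)
              _ = (∑ j, Real.sqrt ‖bop T k j‖) * A := by rw [Finset.sum_mul]
              _ ≤ B * A := mul_le_mul_of_nonneg_right (hrowB k) hApos
        _ = Real.sqrt M * (A * B) ^ (m + 1) := by ring
  -- norm of U^(m+1)
  have hUpow : ∀ m : ℕ,
      ‖(adjoint S * S) ^ (m + 1)‖ ≤ (n : ℝ) * M * A * (A * B) ^ m := by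
    intro m
    rw [expand T (m + 1)]
    calc ‖∑ g : Fin (m+1) → Fin n × Fin n, wordA T (List.ofFn g)‖
        ≤ ∑ g : Fin (m+1) → Fin n × Fin n, ‖wordA T (List.ofFn g)‖ := norm_sum_le _ _
      _ = ∑ p : Fin n × Fin n, ∑ g : Fin m → Fin n × Fin n,
            ‖wordA T (List.ofFn (Fin.cons p g))‖ :=
          sum_peel m (fun g => ‖wordA T (List.ofFn g)‖)
      _ ≤ ∑ p : Fin n × Fin n, Real.sqrt ‖T p.1‖ * Real.sqrt ‖aop T p.1 p.2‖ *
            (Real.sqrt M * (A * B) ^ m) := by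
          refine Finset.sum_le_sum fun p _ => ?_
          calc (∑ g : Fin m → Fin n × Fin n, ‖wordA T (List.ofFn (Fin.cons p g))‖)
              ≤ ∑ g : Fin m → Fin n × Fin n,
                  Real.sqrt ‖T p.1‖ * Real.sqrt ‖aop T p.1 p.2‖ * wB T p.2 (List.ofFn g) := by
                refine Finset.sum_le_sum fun g _ => ?_
                rw [ofFn_cons]
                exact norm_wordA_le_weight T (List.ofFn g) p
            _ = Real.sqrt ‖T p.1‖ * Real.sqrt ‖aop T p.1 p.2‖ *
                  ∑ g : Fin m → Fin n × Fin n, wB T p.2 (List.ofFn g) := by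
                rw [Finset.mul_sum]
            _ ≤ _ := mul_le_mul_of_nonneg_left (hchain m p.2)
                  (mul_nonneg (Real.sqrt_nonneg _) (Real.sqrt_nonneg _))
      _ = (∑ j, Real.sqrt ‖T j‖ * ∑ k, Real.sqrt ‖aop T j k‖) *
            (Real.sqrt M * (A * B) ^ m) := by
          rw [Fintype.sum_prod_type, Finset.sum_mul]
          refine Finset.sum_congr rfl fun j _ => ?_
          rw [Finset.mul_sum, Finset.sum_mul]
      _ ≤ ((n : ℝ) * (Real.sqrt M * A)) * (Real.sqrt M * (A * B) ^ m) := by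
          refine mul_le_mul_of_nonneg_right ?_
            (mul_nonneg (Real.sqrt_nonneg _) (pow_nonneg (mul_nonneg hApos hBpos) m))
          calc (∑ j, Real.sqrt ‖T j‖ * ∑ k, Real.sqrt ‖aop T j k‖)
              ≤ ∑ j : Fin n, Real.sqrt M * A := by
                refine Finset.sum_le_sum fun j _ => ?_
                exact mul_le_mul (Real.sqrt_le_sqrt (hTM j)) (hrowA j)
                  (Finset.sum_nonneg fun k _ => Real.sqrt_nonneg _) (Real.sqrt_nonneg _)
            _ = (n : ℝ) * (Real.sqrt M * A) := by
                rw [Finset.sum_const, Finset.card_univ, Fintype.card_fin, nsmul_eq_mul]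
      _ = (n : ℝ) * M * A * (A * B) ^ m := by
          have hms : Real.sqrt M * Real.sqrt M = M := Real.mul_self_sqrt hMnn
          calc ((n : ℝ) * (Real.sqrt M * A)) * (Real.sqrt M * (A * B) ^ m)
              = (Real.sqrt M * Real.sqrt M) * ((n : ℝ) * A * (A * B) ^ m) := by ring
            _ = (n : ℝ) * M * A * (A * B) ^ m := by rw [hms]; ring
  -- C* identity
  have hU_sa : IsSelfAdjoint (adjoint S * S) := by
    rw [← star_eq_adjoint]; exact IsSelfAdjoint.star_mul_self S
  have hUnorm : ‖adjoint S * S‖ = ‖S‖ ^ 2 := by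
    rw [← star_eq_adjoint, sq]; exact CStarRing.norm_star_mul_self
  have hkey : ∀ t : ℕ, (‖S‖ ^ 2) ^ (2 ^ t) ≤ (n : ℝ) * M * A * (A * B) ^ (2 ^ t - 1) := by
    intro t
    have h1 : (2 : ℕ) ^ t = (2 ^ t - 1) + 1 := by
      have := Nat.one_le_two_pow (n := t); omega
    have h2 : ‖(adjoint S * S) ^ 2 ^ t‖ = ‖adjoint S * S‖ ^ 2 ^ t := by
      have := hU_sa.nnnorm_pow_two_pow t
      calc ‖(adjoint S * S) ^ 2 ^ t‖ = ((‖(adjoint S * S) ^ 2 ^ t‖₊ : NNReal) : ℝ) := rfl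
        _ = ‖adjoint S * S‖ ^ 2 ^ t := by rw [this]; push_cast; rfl
    calc (‖S‖ ^ 2) ^ (2 ^ t) = ‖(adjoint S * S) ^ 2 ^ t‖ := by rw [h2, hUnorm]
      _ ≤ (n : ℝ) * M * A * (A * B) ^ (2 ^ t - 1) := by
          rw [h1]; exact hUpow _
  -- conclude
  by_contra hcon
  push_neg at hcon
  -- first: A > 0 and B > 0, else all T j = 0
  have hTzero : (∀ j, T j = 0) → False := by
    intro hz
    have : S = 0 := by rw [hS]; exact Finset.sum_eq_zero fun k _ => hz k
    rw [this] at hcon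
    simp at hcon
    exact absurd hcon (not_lt.2 (mul_nonneg hApos hBpos))
  have hnorm_aop : ∀ j, ‖aop T j j‖ = ‖T j‖ * ‖T j‖ := fun j => by
    rw [aop, ← star_eq_adjoint]; exact CStarRing.norm_star_mul_self
  have hnorm_bop : ∀ j, ‖bop T j j‖ = ‖T j‖ * ‖T j‖ := fun j => by
    rw [bop, ← star_eq_adjoint]; exact CStarRing.norm_self_mul_star
  have hsqrt_zero : ∀ (x : H →L[ℂ] H), Real.sqrt ‖x‖ ≤ 0 → ‖x‖ = 0 := by
    intro x hx
    have h0 : Real.sqrt ‖x‖ = 0 := le_antisymm hx (Real.sqrt_nonneg _)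
    rwa [Real.sqrt_eq_zero (norm_nonneg _)] at h0
  have hAne : A ≠ 0 := by
    intro h0
    refine hTzero fun j => ?_
    have h1 : Real.sqrt ‖aop T j j‖ ≤ A := by
      refine le_trans ?_ (hrowA j)
      exact Finset.single_le_sum (f := fun k => Real.sqrt ‖aop T j k‖)
        (fun k _ => Real.sqrt_nonneg _) (Finset.mem_univ j)
    rw [h0] at h1
    have h2 := hsqrt_zero _ h1
    rw [hnorm_aop j, mul_self_eq_zero] at h2
    exact norm_eq_zero.mp h2
  have hBne : B ≠ 0 := by
    intro h0
    refine hTzero fun j => ?_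
    have h1 : Real.sqrt ‖bop T j j‖ ≤ B := by
      refine le_trans ?_ (hrowB j)
      exact Finset.single_le_sum (f := fun k => Real.sqrt ‖bop T j k‖)
        (fun k _ => Real.sqrt_nonneg _) (Finset.mem_univ j)
    rw [h0] at h1
    have h2 := hsqrt_zero _ h1
    rw [hnorm_bop j, mul_self_eq_zero] at h2
    exact norm_eq_zero.mp h2
  have hABpos : 0 < A * B :=
    mul_pos (lt_of_le_of_ne hApos (Ne.symm hAne)) (lt_of_le_of_ne hBpos (Ne.symm hBne))
  set C := (n : ℝ) * M * A / (A * B) with hC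
  have hkey2 : ∀ t : ℕ, ((‖S‖ ^ 2) / (A * B)) ^ (2 ^ t) ≤ C := by
    intro t
    have h1 : (2 : ℕ) ^ t = (2 ^ t - 1) + 1 := by
      have := Nat.one_le_two_pow (n := t); omega
    have h2 : C * (A * B) ^ (2 ^ t) = (n : ℝ) * M * A * (A * B) ^ (2 ^ t - 1) := by
      rw [hC, h1, pow_succ]
      field_simp
      ring_nf
      simp only [Nat.add_sub_cancel_left]
    rw [div_pow, div_le_iff₀ (pow_pos hABpos _), h2]
    exact hkey t
  set r := (‖S‖ ^ 2) / (A * B) with hr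
  have hr1 : 1 < r := (one_lt_div hABpos).2 hcon
  obtain ⟨k, hk⟩ := pow_unbounded_of_one_lt C hr1
  have hmono : r ^ k ≤ r ^ (2 ^ k) := pow_le_pow_right₀ hr1.le (Nat.lt_two_pow_self (n := k)).le
  linarith [hkey2 k]
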